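/- Let G be a graph on n vertices and let b and c be positive integers. Then the number of vertex subsets C of G such that the subgraph induced by C is connected, |C| = c, and |N_G(C)| = b is at most n · binom(b + c − 1, b). -/

import Mathlib

open Finset

universe u

variable {V : Type u} [DecidableEq V] [Fintype V]

/-- The open neighbourhood `N_G(C)` of a vertex set `C` : the vertices outside
`C` adjacent to some vertex of `C`. -/
def gnbr (G : SimpleGraph V) [DecidableRel G.Adj] (C : Finset V) : Finset V :=
  Finset.univ.filter (fun y => y ∉ C ∧ ∃ x ∈ C, G.Adj x y)

/-- frontier of a state: unclassified vertices adjacent to the current set. -/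
def gfront (G : SimpleGraph V) [DecidableRel G.Adj] (st : Finset V × Finset V) : Finset V :=
  Finset.univ.filter (fun y => y ∉ st.1 ∧ y ∉ st.2 ∧ ∃ x ∈ st.1, G.Adj x y)

def gstep [LinearOrder V] (G : SimpleGraph V) [DecidableRel G.Adj]
    (st : Finset V × Finset V) (bit : Bool) : Finset V × Finset V :=
  if h : (gfront G st).Nonempty then
    if bit then (st.1, insert ((gfront G st).min' h) st.2)
    else (insert ((gfront G st).min' h) st.1, st.2)
  else st

def grun [LinearOrder V] (G : SimpleGraph V) [DecidableRel G.Adj]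
    (st : Finset V × Finset V) (l : List Bool) : Finset V × Finset V :=
  l.foldl (gstep G) st

def genc [LinearOrder V] (G : SimpleGraph V) [DecidableRel G.Adj]
    (C : Finset V) (st : Finset V × Finset V) : ℕ → List Bool
  | 0 => []
  | (k+1) =>
    if h : (gfront G st).Nonempty then
      (decide ((gfront G st).min' h ∉ C)) ::
        genc G C (gstep G st (decide ((gfront G st).min' h ∉ C))) k
    else []

lemma gnbr_disj (G : SimpleGraph V) [DecidableRel G.Adj] (C : Finset V) :
    Disjoint C (gnbr G C) := by
  rw [Finset.disjoint_left]
  intro a ha hb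
  simp only [gnbr, Finset.mem_filter] at hb
  exact hb.2.1 ha

lemma crossing (G : SimpleGraph V) [DecidableRel G.Adj] {C A : Finset V}
    (hconn : (G.induce ((C : Finset V) : Set V)).Connected)
    (hA : A.Nonempty) (hAC : A ⊆ C) (hne : ¬ C ⊆ A) :
    ∃ y, y ∉ A ∧ y ∈ C ∧ ∃ x ∈ A, G.Adj x y := by
  obtain ⟨a, ha⟩ := hA
  obtain ⟨bb, hbC, hbA⟩ := Finset.not_subset.mp hne
  have haC : (a : V) ∈ ((C : Finset V) : Set V) := by simpa using hAC ha
  have hbC' : (bb : V) ∈ ((C : Finset V) : Set V) := by simpa using hbC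
  obtain ⟨p⟩ := hconn.preconnected ⟨a, haC⟩ ⟨bb, hbC'⟩
  obtain ⟨d, _, hd1, hd2⟩ := p.exists_boundary_dart {z | (z : V) ∈ A} ha hbA
  refine ⟨d.snd, hd2, by simpa using d.snd.2, d.fst, hd1, ?_⟩
  exact d.adj

lemma genc_run (G : SimpleGraph V) [DecidableRel G.Adj] [LinearOrder V]
    (C : Finset V) (hconn : (G.induce ((C : Finset V) : Set V)).Connected) :
    ∀ (k : ℕ) (st : Finset V × Finset V),
      st.1.Nonempty → st.1 ⊆ C → st.2 ⊆ gnbr G C →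
      (st.1 ∪ st.2).card + k = C.card + (gnbr G C).card →
      grun G st (genc G C st k) = (C, gnbr G C) ∧
      (genc G C st k).count true + st.2.card = (gnbr G C).card ∧
      (genc G C st k).length = k := by
  intro k
  induction k with
  | zero =>
    intro st hne h1 h2 hcard
    have hdisj := gnbr_disj G C
    have hsub : st.1 ∪ st.2 ⊆ C ∪ gnbr G C := Finset.union_subset_union h1 h2
    have hcu : (C ∪ gnbr G C).card = C.card + (gnbr G C).card :=
      Finset.card_union_of_disjoint hdisj
    have heq : st.1 ∪ st.2 = C ∪ gnbr G C := by
      apply Finset.eq_of_subset_of_card_le hsub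
      omega
    have h1' : C ⊆ st.1 := by
      intro x hx
      have : x ∈ st.1 ∪ st.2 := heq ▸ Finset.mem_union_left _ hx
      rcases Finset.mem_union.mp this with h | h
      · exact h
      · exact absurd hx (Finset.disjoint_left.mp hdisj.symm (h2 h))
    have h2' : gnbr G C ⊆ st.2 := by
      intro x hx
      have : x ∈ st.1 ∪ st.2 := heq ▸ Finset.mem_union_right _ hx
      rcases Finset.mem_union.mp this with h | h
      · exact absurd hx (Finset.disjoint_left.mp hdisj (h1 h))
      · exact h
    have e1 : st.1 = C := Finset.Subset.antisymm h1 h1'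
    have e2 : st.2 = gnbr G C := Finset.Subset.antisymm h2 h2'
    refine ⟨?_, ?_, rfl⟩
    · show grun G st [] = _
      simp only [grun, List.foldl_nil]
      exact Prod.ext e1 e2
    · simp [genc, e2]
  | succ k ih =>
    intro st hne h1 h2 hcard
    have hdisj := gnbr_disj G C
    have hcu : (C ∪ gnbr G C).card = C.card + (gnbr G C).card :=
      Finset.card_union_of_disjoint hdisj
    -- frontier is nonempty
    have hfront : (gfront G st).Nonempty := by
      by_cases hCst : C ⊆ st.1
      · -- st.1 = C; some gnbr vertex is unclassified
        have e1 : st.1 = C := Finset.Subset.antisymm h1 hCst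
        have hss : st.1 ∪ st.2 ⊂ C ∪ gnbr G C := by
          rw [Finset.ssubset_iff_subset_ne]
          refine ⟨Finset.union_subset_union h1 h2, ?_⟩
          intro h
          rw [h] at hcard
          omega
        obtain ⟨z, hz1, hz2⟩ := Finset.exists_of_ssubset hss
        have hz1' : z ∉ st.1 := fun h => hz2 (Finset.mem_union_left _ h)
        have hz2' : z ∉ st.2 := fun h => hz2 (Finset.mem_union_right _ h)
        have hzC : z ∉ C := by rw [← e1]; exact hz1'
        have hzg : z ∈ gnbr G C := by
          rcases Finset.mem_union.mp hz1 with h | h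
          · exact absurd h hzC
          · exact h
        simp only [gnbr, Finset.mem_filter] at hzg
        obtain ⟨_, _, x, hx, hadj⟩ := hzg
        have hx' : x ∈ st.1 := by rw [e1]; exact hx
        refine ⟨z, ?_⟩
        simp only [gfront, Finset.mem_filter]
        exact ⟨Finset.mem_univ _, hz1', hz2', x, hx', hadj⟩
      · obtain ⟨y, hy1, hy2, x, hx, hadj⟩ := crossing G hconn hne h1 hCst
        refine ⟨y, ?_⟩
        simp only [gfront, Finset.mem_filter]
        exact ⟨Finset.mem_univ _, hy1,
          fun h => Finset.disjoint_left.mp hdisj hy2 (h2 h), x, hx, hadj⟩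
    set y := (gfront G st).min' hfront with hy
    have hymem : y ∈ gfront G st := (gfront G st).min'_mem hfront
    simp only [gfront, Finset.mem_filter] at hymem
    obtain ⟨_, hy1, hy2, x, hx, hadj⟩ := hymem
    by_cases hyC : y ∈ C
    · -- bit = false
      have hbit : decide (y ∉ C) = false := by simp [hyC]
      have hgenc : genc G C st (k+1) =
          false :: genc G C (insert y st.1, st.2) k := by
        rw [genc, dif_pos hfront]
        simp only [← hy, hbit]
        congr 1
        · simp [gstep, dif_pos hfront, ← hy, hbit]
      have hst' : ((insert y st.1 ∪ st.2).card) + k = C.card + (gnbr G C).card := by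
        rw [Finset.insert_union, Finset.card_insert_of_notMem
          (by simp [hy1, hy2])]
        omega
      obtain ⟨ha, hb, hl⟩ := ih (insert y st.1, st.2)
        (Finset.insert_nonempty _ _) (Finset.insert_subset hyC h1) h2 hst'
      refine ⟨?_, ?_, ?_⟩
      · rw [hgenc]
        show grun G (gstep G st false) _ = _
        simp only [gstep, dif_pos hfront, if_neg Bool.false_ne_true, ← hy]
        exact ha
      · rw [hgenc]; simpa using hb
      · rw [hgenc]; simp [hl]
    · -- bit = true
      have hyg : y ∈ gnbr G C := by
        simp only [gnbr, Finset.mem_filter]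
        exact ⟨Finset.mem_univ _, hyC, x, h1 hx, hadj⟩
      have hbit : decide (y ∉ C) = true := by simp [hyC]
      have hgenc : genc G C st (k+1) =
          true :: genc G C (st.1, insert y st.2) k := by
        rw [genc, dif_pos hfront]
        simp only [← hy, hbit]
        congr 1
        · simp [gstep, dif_pos hfront, ← hy, hbit]
      have hst' : ((st.1 ∪ insert y st.2).card) + k = C.card + (gnbr G C).card := by
        rw [Finset.union_insert, Finset.card_insert_of_notMem
          (by simp [hy1, hy2])]
        omega
      obtain ⟨ha, hb, hl⟩ := ih (st.1, insert y st.2)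
        hne h1 (Finset.insert_subset hyg h2) hst'
      have hy2' : y ∉ st.2 := hy2
      refine ⟨?_, ?_, ?_⟩
      · rw [hgenc]
        show grun G (gstep G st true) _ = _
        simp only [gstep, dif_pos hfront, if_pos rfl, ← hy]
        exact ha
      · rw [hgenc]
        simp only [List.count_cons, if_pos rfl]
        have : (insert y st.2).card = st.2.card + 1 :=
          Finset.card_insert_of_notMem hy2'
        simp only [this] at hb
        simp only [beq_self_eq_true, if_true]
        omega
      · rw [hgenc]; simp [hl]

/-- positions of `true` in a list of booleans -/
def trueIdx (l : List Bool) : Finset ℕ :=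
  (Finset.range l.length).filter (fun i => l.getD i false = true)

lemma trueIdx_card (l : List Bool) : (trueIdx l).card = l.count true := by
  induction l using List.reverseRec with
  | nil => simp [trueIdx]
  | append_singleton l a ih =>
    simp only [trueIdx, List.length_append, List.length_cons, List.length_nil]
    rw [Finset.range_add_one, Finset.filter_insert]
    have hagree : ∀ i ∈ Finset.range l.length,
        ((l ++ [a]).getD i false = true) = (l.getD i false = true) := by
      intro i hi
      rw [Finset.mem_range] at hi
      rw [List.getD_eq_getElem _ _ (by simp; omega), List.getD_eq_getElem _ _ hi,
        List.getElem_append_left hi]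
    rw [Finset.filter_congr (fun i hi => by rw [hagree i hi])]
    have hlast : (l ++ [a]).getD l.length false = a := by
      rw [List.getD_eq_getElem _ _ (by simp), List.getElem_append_right (le_refl _)]
      simp
    have ih' : (Finset.filter (fun i => l.getD i false = true)
        (Finset.range l.length)).card = l.count true := ih
    by_cases ha : a = true
    · rw [if_pos (by rw [hlast, ha]), Finset.card_insert_of_notMem (by simp),
        List.count_append, ih', ha]
      simp
    · have ha' : a = false := by cases a <;> simp_all
      rw [if_neg (by rw [hlast, ha']; simp), List.count_append, ih', ha']
      simp

lemma trueIdx_inj {l₁ l₂ : List Bool} (hlen : l₁.length = l₂.length)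
    (h : trueIdx l₁ = trueIdx l₂) : l₁ = l₂ := by
  apply List.ext_getElem hlen
  intro i hi1 hi2
  have h1 : i ∈ trueIdx l₁ ↔ l₁[i] = true := by
    simp [trueIdx, Finset.mem_filter, Finset.mem_range, hi1,
      List.getD_eq_getElem _ _ hi1]
  have h2 : i ∈ trueIdx l₂ ↔ l₂[i] = true := by
    simp [trueIdx, Finset.mem_filter, Finset.mem_range, hi2,
      List.getD_eq_getElem _ _ hi2]
  rw [Bool.eq_iff_iff, ← h1, ← h2, h]

/-- Fomin–Villanger: the number of connected vertex subsets `C` with `|C| = c`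
and `|N_G(C)| = b` is at most `n · binom(b + c − 1, b)`. -/
theorem connected_subsets_count (G : SimpleGraph V) [DecidableRel G.Adj]
    (b c : ℕ) (hb : 0 < b) (hc : 0 < c) :
    {C : Finset V | (G.induce ((C : Finset V) : Set V)).Connected ∧
        C.card = c ∧ (gnbr G C).card = b}.ncard ≤
      Fintype.card V * Nat.choose (b + c - 1) b := by
  classical
  letI : LinearOrder V := LinearOrder.lift' (Fintype.equivFin V) (Equiv.injective _)
  rcases isEmpty_or_nonempty V with hV | hV
  · convert Nat.zero_le _
    rw [Set.ncard_eq_zero]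
    ext C
    simp only [Set.mem_setOf_eq, Set.mem_empty_iff_false, iff_false]
    rintro ⟨-, hcard, -⟩
    have : C = ∅ := Finset.eq_empty_of_isEmpty C
    rw [this] at hcard
    simp at hcard
    omega
  inhabit V
  set m := b + c - 1 with hm
  set Φ : Finset V → V × Finset ℕ := fun C =>
    if hC : C.Nonempty then
      (C.min' hC, trueIdx (genc G C (({C.min' hC} : Finset V), (∅ : Finset V)) m))
    else (default, ∅) with hΦ
  set T : Finset (V × Finset ℕ) := Finset.univ ×ˢ (Finset.range m).powersetCard b with hT
  have key : ∀ C : Finset V,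
      (G.induce ((C : Finset V) : Set V)).Connected → C.card = c → (gnbr G C).card = b →
      ∃ (hC : C.Nonempty),
        grun G ({C.min' hC}, ∅) (genc G C ({C.min' hC}, ∅) m) = (C, gnbr G C) ∧
        (genc G C ({C.min' hC}, ∅) m).count true = b ∧
        (genc G C ({C.min' hC}, ∅) m).length = m := by
    intro C hconn hcard hnbr
    have hC : C.Nonempty := Finset.card_pos.mp (by omega)
    refine ⟨hC, ?_⟩
    have := genc_run G C hconn m ({C.min' hC}, ∅)
      (Finset.singleton_nonempty _)
      (Finset.singleton_subset_iff.mpr (C.min'_mem hC))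
      (Finset.empty_subset _)
      (by simp [hcard, hnbr]; omega)
    obtain ⟨ha, hb', hl⟩ := this
    rw [hnbr] at hb'
    exact ⟨ha, by simpa using hb', hl⟩
  apply le_trans (Set.ncard_le_ncard_of_injOn Φ ?_ ?_ T.finite_toSet)
  · rw [Set.ncard_coe_finset, hT, Finset.card_product, Finset.card_univ,
      Finset.card_powersetCard, Finset.card_range]
  · -- maps into T
    rintro C ⟨hconn, hcard, hnbr⟩
    obtain ⟨hC, -, hcount, hlen⟩ := key C hconn hcard hnbr
    simp only [hΦ, dif_pos hC]
    rw [Finset.mem_coe, hT, Finset.mem_product]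
    refine ⟨Finset.mem_univ _, ?_⟩
    rw [Finset.mem_powersetCard]
    constructor
    · intro i hi
      simp only [trueIdx, Finset.mem_filter, Finset.mem_range, hlen] at hi
      simp [Finset.mem_range, hi.1]
    · rw [trueIdx_card, hcount]
  · -- injective on S
    rintro C₁ ⟨hconn₁, hcard₁, hnbr₁⟩ C₂ ⟨hconn₂, hcard₂, hnbr₂⟩ heq
    obtain ⟨hC₁, hrun₁, -, hlen₁⟩ := key C₁ hconn₁ hcard₁ hnbr₁
    obtain ⟨hC₂, hrun₂, -, hlen₂⟩ := key C₂ hconn₂ hcard₂ hnbr₂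
    simp only [hΦ, dif_pos hC₁, dif_pos hC₂, Prod.mk.injEq] at heq
    obtain ⟨hv, hidx⟩ := heq
    have hleq : genc G C₁ ({C₁.min' hC₁}, ∅) m = genc G C₂ ({C₂.min' hC₂}, ∅) m :=
      trueIdx_inj (by rw [hlen₁, hlen₂]) hidx
    have : (C₁, gnbr G C₁) = (C₂, gnbr G C₂) := by
      rw [← hrun₁, ← hrun₂, hleq, hv]
    exact congrArg Prod.fst this
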